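/- arXiv:2605.08640 — 3 statements merged into one kernel-verified Lean document; each statement's English description precedes it below -/
import Mathlib

section
/- If t ∈ (0,1) and the flow network v_t is Lipschitz with constant L_v < 1/(1−t), then the residual operator R_t = S̄_t − I satisfies Lipschitz constant ξ = (1−t)(1 + t·L_v) with (1−t) ≤ ξ < 1. -/
open MeasureTheory

/-- For `t ∈ (0,1)` and flow network `v` that is `L_v`-Lipschitz with
`L_v < 1/(1-t)`, the residual operator `R = S̄ - I` is Lipschitz with constant
`ξ = (1-t)(1 + t L_v)`, and `(1-t) ≤ ξ < 1`. -/
theorem residual_operator_contraction_bound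
    (m : ℕ) (t Lv : ℝ) (ht0 : 0 < t) (ht1 : t < 1) (hLv : 0 ≤ Lv)
    (hLv' : Lv < 1 / (1 - t))
    (v : EuclideanSpace ℝ (Fin m) → EuclideanSpace ℝ (Fin m))
    (hv : ∀ x y, ‖v x - v y‖ ≤ Lv * ‖x - y‖)
    (D : EuclideanSpace ℝ (Fin m) → EuclideanSpace ℝ (Fin m))
    (hDdef : ∀ x, D x = x + (1 - t) • v x)
    (μ : Measure (EuclideanSpace ℝ (Fin m))) [IsProbabilityMeasure μ]
    (hInt : ∀ x, Integrable (fun ε => D (t • x + (1 - t) • ε)) μ)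
    (Sbar R : EuclideanSpace ℝ (Fin m) → EuclideanSpace ℝ (Fin m))
    (hS : ∀ x, Sbar x = ∫ ε, D (t • x + (1 - t) • ε) ∂μ)
    (hR : ∀ x, R x = Sbar x - x)
    (ξ : ℝ) (hξ : ξ = (1 - t) * (1 + t * Lv)) :
    (∀ x y, ‖R x - R y‖ ≤ ξ * ‖x - y‖) ∧ (1 - t) ≤ ξ ∧ ξ < 1 := by
  have ht1' : (0:ℝ) < 1 - t := by linarith
  refine ⟨?_, ?_, ?_⟩
  · intro x y
    set a : EuclideanSpace ℝ (Fin m) → EuclideanSpace ℝ (Fin m) :=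
      fun ε => t • x + (1 - t) • ε with ha
    set b : EuclideanSpace ℝ (Fin m) → EuclideanSpace ℝ (Fin m) :=
      fun ε => t • y + (1 - t) • ε with hb
    have hg : ∀ ε, D (a ε) - D (b ε) = t • (x - y) + (1 - t) • (v (a ε) - v (b ε)) := by
      intro ε
      rw [hDdef, hDdef, smul_sub, smul_sub]
      simp only [ha, hb]
      abel
    have hgint : Integrable (fun ε => D (a ε) - D (b ε)) μ := (hInt x).sub (hInt y)
    have hwint : Integrable (fun ε => v (a ε) - v (b ε)) μ := by
      have : Integrable (fun ε => (D (a ε) - D (b ε)) - t • (x - y)) μ :=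
        hgint.sub (integrable_const _)
      have h2 : Integrable (fun ε => (1 - t) • (v (a ε) - v (b ε))) μ := by
        convert this using 1
        funext ε
        rw [hg ε]; abel
      have h3 := h2.smul ((1 - t)⁻¹)
      have h4 : Integrable (fun ε => (1 - t)⁻¹ • (1 - t) • (v (a ε) - v (b ε))) μ := h3
      convert h4 using 1
      funext ε
      rw [smul_smul, inv_mul_cancel₀ ht1'.ne', one_smul]
    have habd : ∀ ε, ‖v (a ε) - v (b ε)‖ ≤ Lv * (t * ‖x - y‖) := by
      intro ε
      have h1 := hv (a ε) (b ε)
      have h2 : a ε - b ε = t • (x - y) := by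
        simp only [ha, hb, smul_sub]; abel
      calc ‖v (a ε) - v (b ε)‖ ≤ Lv * ‖a ε - b ε‖ := h1
        _ = Lv * (t * ‖x - y‖) := by
            rw [h2, norm_smul, Real.norm_eq_abs, abs_of_pos ht0]
    have hwnorm : ‖∫ ε, (v (a ε) - v (b ε)) ∂μ‖ ≤ Lv * (t * ‖x - y‖) := by
      calc ‖∫ ε, (v (a ε) - v (b ε)) ∂μ‖ ≤ ∫ ε, ‖v (a ε) - v (b ε)‖ ∂μ :=
            norm_integral_le_integral_norm _
        _ ≤ ∫ _ε, Lv * (t * ‖x - y‖) ∂μ := by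
            exact integral_mono hwint.norm (integrable_const _) habd
        _ = Lv * (t * ‖x - y‖) := by simp
    have hRdiff : R x - R y
        = (t - 1) • (x - y) + (1 - t) • ∫ ε, (v (a ε) - v (b ε)) ∂μ := by
      rw [hR, hR, hS, hS]
      have hix : (∫ ε, D (t • x + (1 - t) • ε) ∂μ) - (∫ ε, D (t • y + (1 - t) • ε) ∂μ)
          = ∫ ε, (D (a ε) - D (b ε)) ∂μ := (integral_sub (hInt x) (hInt y)).symm
      have : (∫ ε, (D (a ε) - D (b ε)) ∂μ)
          = t • (x - y) + (1 - t) • ∫ ε, (v (a ε) - v (b ε)) ∂μ := by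
        rw [show (fun ε => D (a ε) - D (b ε))
            = fun ε => t • (x - y) + (1 - t) • (v (a ε) - v (b ε)) from funext hg]
        have hi2 : Integrable (fun ε => (1 - t) • (v (a ε) - v (b ε))) μ := hwint.smul (1 - t)
        rw [integral_add (integrable_const _) hi2, integral_const,
          integral_smul, probReal_univ, one_smul]
      have hfin : (∫ ε, D (t • x + (1 - t) • ε) ∂μ) - x
            - ((∫ ε, D (t • y + (1 - t) • ε) ∂μ) - y)
          = ((∫ ε, D (t • x + (1 - t) • ε) ∂μ) - (∫ ε, D (t • y + (1 - t) • ε) ∂μ))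
            - (x - y) := by abel
      rw [hfin, hix, this]
      have : (t - 1) • (x - y) = t • (x - y) - (x - y) := by
        rw [sub_smul, one_smul]
      rw [this]; abel
    calc ‖R x - R y‖
        ≤ ‖(t - 1) • (x - y)‖ + ‖(1 - t) • ∫ ε, (v (a ε) - v (b ε)) ∂μ‖ := by
          rw [hRdiff]; exact norm_add_le _ _
      _ ≤ (1 - t) * ‖x - y‖ + (1 - t) * (Lv * (t * ‖x - y‖)) := by
          rw [norm_smul, norm_smul, Real.norm_eq_abs, Real.norm_eq_abs,
            abs_of_pos ht1', abs_of_neg (by linarith : t - 1 < 0)]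
          have : -(t - 1) = 1 - t := by ring
          rw [this]
          gcongr
      _ = ξ * ‖x - y‖ := by rw [hξ]; ring
  · nlinarith [mul_nonneg (mul_nonneg ht1'.le ht0.le) hLv]
  · have : Lv * (1 - t) < 1 := by
      rw [one_div] at hLv'
      calc Lv * (1 - t) < (1 - t)⁻¹ * (1 - t) := by gcongr
        _ = 1 := inv_mul_cancel₀ ht1'.ne'
    nlinarith
end

section
/- Let T* : R^d → R^d be averaged with λ ∈ (0,1) and nonexpansive part N, and suppose Fix(T*) ≠ ∅. Let (T_k)_k be operators and define errors e_k = T_k(w_k) − T*(w_k) along the iteration w_{k+1} = T_k(w_k). If Σ_k ‖e_k‖ < ∞, then (w_k) converges to some fixed point of T*. -/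
open Filter Topology

private lemma combo_norm_sq {E : Type} [NormedAddCommGroup E] [InnerProductSpace ℝ E]
    (t : ℝ) (a b : E) :
    ‖(1-t) • a + t • b‖^2 = (1-t)*‖a‖^2 + t*‖b‖^2 - t*(1-t)*‖a-b‖^2 := by
  have h1 := @norm_add_sq_real E _ _ ((1-t) • a) (t • b)
  have h2 := @norm_sub_sq_real E _ _ a b
  have ha : ‖(1-t) • a‖^2 = (1-t)^2 * ‖a‖^2 := by
    rw [norm_smul, Real.norm_eq_abs, mul_pow, sq_abs]
  have hb : ‖t • b‖^2 = t^2 * ‖b‖^2 := by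
    rw [norm_smul, Real.norm_eq_abs, mul_pow, sq_abs]
  have hi : (inner ℝ ((1-t) • a) (t • b) : ℝ) = (1-t) * t * inner ℝ a b := by
    rw [real_inner_smul_left, real_inner_smul_right]; ring
  rw [h1, ha, hb, hi]
  nlinarith [h2]

set_option maxHeartbeats 1000000 in
/-- Inexact Krasnosel'skii–Mann iteration: if `Tstar` is averaged with a fixed
point and the errors `e_k = T_k (w_k) - Tstar (w_k)` along the iteration
`w_{k+1} = T_k (w_k)` are summable in norm, then `(w_k)` converges to a fixed
point of `Tstar`. -/
theorem inexact_krasnoselskii_mann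
    (d : ℕ) (lam : ℝ) (hlam0 : 0 < lam) (hlam1 : lam < 1)
    (N Tstar : EuclideanSpace ℝ (Fin d) → EuclideanSpace ℝ (Fin d))
    (hN : ∀ x y, ‖N x - N y‖ ≤ ‖x - y‖)
    (hTstar : ∀ x, Tstar x = (1 - lam) • x + lam • N x)
    (hfix : ∃ p, Tstar p = p)
    (T : ℕ → EuclideanSpace ℝ (Fin d) → EuclideanSpace ℝ (Fin d))
    (w : ℕ → EuclideanSpace ℝ (Fin d))
    (hiter : ∀ k, w (k + 1) = T k (w k))
    (hsum : Summable (fun k => ‖T k (w k) - Tstar (w k)‖)) :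
    ∃ xstar, Tstar xstar = xstar ∧ Tendsto w atTop (𝓝 xstar) := by
  obtain ⟨p, hp⟩ := hfix
  set ε : ℕ → ℝ := fun k => ‖T k (w k) - Tstar (w k)‖ with hε
  have hsumε : Summable ε := hsum
  have hε0 : ∀ k, 0 ≤ ε k := fun k => norm_nonneg _
  set S : ℝ := ∑' k, ε k with hS
  have hS0 : 0 ≤ S := tsum_nonneg hε0
  have hεS : ∀ k, ε k ≤ S := fun k => Summable.le_tsum hsumε k (fun j _ => hε0 j)
  -- N fixes p
  have hNp : N p = p := by
    have h : (1 - lam) • p + lam • N p = p := by rw [← hTstar]; exact hp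
    have h2 : lam • N p = lam • p := by
      have h3 : lam • N p = p - (1 - lam) • p := by
        rw [eq_sub_iff_add_eq, add_comm]; exact h
      rw [h3, sub_smul, one_smul]; abel
    exact smul_right_injective (EuclideanSpace ℝ (Fin d)) (ne_of_gt hlam0) h2
  -- key inequality
  have hkey : ∀ x, ‖Tstar x - p‖^2 ≤ ‖x - p‖^2 - ((1-lam)/lam) * ‖x - Tstar x‖^2 := by
    intro x
    have hdecomp : Tstar x - p = (1 - lam) • (x - p) + lam • (N x - p) := by
      rw [hTstar, smul_sub, smul_sub, sub_smul, sub_smul, one_smul, one_smul]; abel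
    have hres : x - Tstar x = lam • (x - N x) := by
      rw [hTstar, smul_sub, sub_smul, one_smul]; abel
    have h1 : ‖Tstar x - p‖^2
        = (1-lam)*‖x-p‖^2 + lam*‖N x - p‖^2 - lam*(1-lam)*‖(x-p)-(N x - p)‖^2 := by
      rw [hdecomp]; exact combo_norm_sq lam (x-p) (N x - p)
    have h2 : ‖N x - p‖ ≤ ‖x - p‖ := by
      have := hN x p; rwa [hNp] at this
    have h3 : (x - p) - (N x - p) = x - N x := by abel
    have h4 : ‖x - Tstar x‖^2 = lam^2 * ‖x - N x‖^2 := by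
      rw [hres, norm_smul, Real.norm_eq_abs, mul_pow, sq_abs]
    rw [h1, h3]
    have h5 : ((1-lam)/lam) * ‖x - Tstar x‖^2 = lam*(1-lam)*‖x - N x‖^2 := by
      rw [h4]; field_simp
    rw [h5]
    have h6 : ‖N x - p‖^2 ≤ ‖x - p‖^2 := by
      nlinarith [norm_nonneg (N x - p), norm_nonneg (x - p)]
    nlinarith [h6]
  -- iteration step
  have hstep : ∀ k, ‖w (k+1) - p‖ ≤ ‖Tstar (w k) - p‖ + ε k := by
    intro k
    have h : w (k+1) - p = (Tstar (w k) - p) + (T k (w k) - Tstar (w k)) := by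
      rw [hiter k]; abel
    rw [h]; exact norm_add_le _ _
  have hTne : ∀ x, ‖Tstar x - p‖ ≤ ‖x - p‖ := by
    intro x
    have h := hkey x
    have h0 : 0 ≤ ((1-lam)/lam) * ‖x - Tstar x‖^2 :=
      mul_nonneg (div_nonneg (by linarith) hlam0.le) (sq_nonneg _)
    nlinarith [norm_nonneg (Tstar x - p), norm_nonneg (x - p)]
  have hmono : ∀ k, ‖w (k+1) - p‖ ≤ ‖w k - p‖ + ε k :=
    fun k => (hstep k).trans (by linarith [hTne (w k)])
  -- partial sums
  have hpart : ∀ n, ∑ k ∈ Finset.range n, ε k ≤ S :=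
    fun n => Summable.sum_le_tsum _ (fun j _ => hε0 j) hsumε
  -- bound: ‖w k - p‖ ≤ ‖w 0 - p‖ + S
  set M : ℝ := ‖w 0 - p‖ + S with hM
  have hbound : ∀ k, ‖w k - p‖ ≤ ‖w 0 - p‖ + ∑ j ∈ Finset.range k, ε j := by
    intro k
    induction k with
    | zero => simp
    | succ n ih =>
      calc ‖w (n+1) - p‖ ≤ ‖w n - p‖ + ε n := hmono n
        _ ≤ ‖w 0 - p‖ + ∑ j ∈ Finset.range n, ε j + ε n := by linarith
        _ = ‖w 0 - p‖ + ∑ j ∈ Finset.range (n+1), ε j := by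
            rw [Finset.sum_range_succ]; ring
  have hboundM : ∀ k, ‖w k - p‖ ≤ M := fun k => (hbound k).trans (by
    have := hpart k; rw [hM]; linarith)
  have hM0 : 0 ≤ M := le_trans (norm_nonneg _) (hboundM 0)
  -- residual summability
  set c : ℝ := (1-lam)/lam with hc
  have hc0 : 0 < c := div_pos (by linarith) hlam0
  set r : ℕ → ℝ := fun k => ‖w k - Tstar (w k)‖ with hr
  have hr0 : ∀ k, 0 ≤ r k := fun k => norm_nonneg _
  have hsq : ∀ k, ‖w (k+1) - p‖^2 + c * r k ^2 ≤ ‖w k - p‖^2 + (2*M + S) * ε k := by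
    intro k
    have h1 := hstep k
    have h2 := hkey (w k)
    have h3 : ‖Tstar (w k) - p‖ ≤ M := (hTne (w k)).trans (hboundM k)
    have h4 : ‖w (k+1) - p‖^2 ≤ (‖Tstar (w k) - p‖ + ε k)^2 :=
      pow_le_pow_left₀ (norm_nonneg _) h1 2
    have h5 : ε k ≤ S := hεS k
    nlinarith [hε0 k, norm_nonneg (Tstar (w k) - p)]
  have htel : ∀ n, ∑ k ∈ Finset.range n, c * r k ^2 + ‖w n - p‖^2
      ≤ ‖w 0 - p‖^2 + (2*M+S) * ∑ k ∈ Finset.range n, ε k := by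
    intro n
    induction n with
    | zero => simp
    | succ m ih =>
      rw [Finset.sum_range_succ, Finset.sum_range_succ]
      have := hsq m
      linarith
  have hsumsq : Summable (fun k => r k ^ 2) := by
    apply summable_of_sum_range_le (c := (‖w 0 - p‖^2 + (2*M+S)*S)/c)
      (fun k => sq_nonneg _)
    intro n
    have h1 := htel n
    have h2 : (2*M+S) * ∑ k ∈ Finset.range n, ε k ≤ (2*M+S)*S :=
      mul_le_mul_of_nonneg_left (hpart n) (by linarith)
    have h3 : c * ∑ k ∈ Finset.range n, r k ^2 ≤ ‖w 0 - p‖^2 + (2*M+S)*S := by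
      rw [Finset.mul_sum]
      linarith [sq_nonneg (‖w n - p‖)]
    rw [le_div_iff₀ hc0]
    linarith [h3]
  -- residual tends to zero
  have hrz : Tendsto r atTop (𝓝 0) := by
    have h2 : Tendsto (fun k => r k ^ 2) atTop (𝓝 0) := hsumsq.tendsto_atTop_zero
    have h3 : Tendsto (fun k => Real.sqrt (r k ^ 2)) atTop (𝓝 (Real.sqrt 0)) :=
      (Real.continuous_sqrt.tendsto 0).comp h2
    simpa [Real.sqrt_sq (hr0 _), Real.sqrt_zero] using h3
  -- bounded sequence: subsequence converging to some a
  have hwb : ∀ k, w k ∈ Metric.closedBall (0 : EuclideanSpace ℝ (Fin d)) (M + ‖p‖) := by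
    intro k
    rw [Metric.mem_closedBall, dist_zero_right]
    have h1 : w k - p + p = w k := sub_add_cancel _ _
    calc ‖w k‖ = ‖w k - p + p‖ := by rw [h1]
      _ ≤ ‖w k - p‖ + ‖p‖ := norm_add_le _ _
      _ ≤ M + ‖p‖ := by linarith [hboundM k]
  obtain ⟨a, -, φ, hφ, hconv⟩ :=
    (isCompact_closedBall (0 : EuclideanSpace ℝ (Fin d)) (M + ‖p‖)).tendsto_subseq hwb
  -- Tstar continuous
  have hNcont : Continuous N := by
    apply LipschitzWith.continuous (K := 1)
    intro x y
    rw [edist_dist, edist_dist, dist_eq_norm, dist_eq_norm]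
    simpa using ENNReal.ofReal_le_ofReal (hN x y)
  have hTcont : Continuous Tstar := by
    have h : Tstar = fun x => (1 - lam) • x + lam • N x := funext hTstar
    rw [h]
    exact (continuous_id.const_smul (1 - lam)).add (hNcont.const_smul lam)
  -- a is a fixed point
  have hfa : Tstar a = a := by
    have h1 : Tendsto (fun n => Tstar (w (φ n))) atTop (𝓝 (Tstar a)) :=
      (hTcont.tendsto a).comp hconv
    have h2 : Tendsto (fun n => w (φ n) - Tstar (w (φ n))) atTop (𝓝 0) := by
      rw [tendsto_zero_iff_norm_tendsto_zero]
      exact hrz.comp hφ.tendsto_atTop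
    have h3 : Tendsto (fun n => Tstar (w (φ n))) atTop (𝓝 a) := by
      have h4 := ((hconv).sub h2)
      simpa using h4
    exact tendsto_nhds_unique h1 h3
  -- Tstar nonexpansive around a
  have hTnea : ∀ x, ‖Tstar x - a‖ ≤ ‖x - a‖ := by
    intro x
    have h1 : Tstar x - Tstar a = (1 - lam) • (x - a) + lam • (N x - N a) := by
      rw [hTstar, hTstar, smul_sub, smul_sub, sub_smul, sub_smul, one_smul, one_smul]
      abel
    calc ‖Tstar x - a‖ = ‖(1 - lam) • (x - a) + lam • (N x - N a)‖ := by
          rw [← h1, hfa]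
      _ ≤ ‖(1 - lam) • (x - a)‖ + ‖lam • (N x - N a)‖ := norm_add_le _ _
      _ = (1 - lam) * ‖x - a‖ + lam * ‖N x - N a‖ := by
          rw [norm_smul, norm_smul, Real.norm_eq_abs, Real.norm_eq_abs,
            abs_of_pos (by linarith : (0:ℝ) < 1 - lam), abs_of_pos hlam0]
      _ ≤ (1 - lam) * ‖x - a‖ + lam * ‖x - a‖ := by
          have := hN x a; nlinarith
      _ = ‖x - a‖ := by ring
  have hmonoa : ∀ k, ‖w (k+1) - a‖ ≤ ‖w k - a‖ + ε k := by
    intro k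
    have h : w (k+1) - a = (Tstar (w k) - a) + (T k (w k) - Tstar (w k)) := by
      rw [hiter k]; abel
    rw [h]
    calc ‖(Tstar (w k) - a) + (T k (w k) - Tstar (w k))‖
        ≤ ‖Tstar (w k) - a‖ + ε k := norm_add_le _ _
      _ ≤ ‖w k - a‖ + ε k := by linarith [hTnea (w k)]
  -- u k = ‖w k - a‖ - partial sum is antitone, bounded below
  set s : ℕ → ℝ := fun n => ∑ k ∈ Finset.range n, ε k with hsdef
  set u : ℕ → ℝ := fun k => ‖w k - a‖ - s k with hu
  have hua : Antitone u := by
    apply antitone_nat_of_succ_le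
    intro n
    simp only [hu, hsdef, Finset.sum_range_succ]
    linarith [hmonoa n]
  have hub : BddBelow (Set.range u) := by
    refine ⟨-S, ?_⟩
    rintro x ⟨n, rfl⟩
    simp only [hu, hsdef]
    linarith [hpart n, norm_nonneg (w n - a)]
  have hul : Tendsto u atTop (𝓝 (⨅ n, u n)) := tendsto_atTop_ciInf hua hub
  have hsl : Tendsto s atTop (𝓝 S) := hsumε.hasSum.tendsto_sum_nat
  have hdl : Tendsto (fun k => ‖w k - a‖) atTop (𝓝 ((⨅ n, u n) + S)) := by
    have h := hul.add hsl
    have heq : (fun k => u k + s k) = fun k => ‖w k - a‖ := by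
      funext k; simp [hu]
    rwa [heq] at h
  -- along the subsequence the distance tends to 0
  have hdz : Tendsto (fun n => ‖w (φ n) - a‖) atTop (𝓝 0) := by
    rw [tendsto_iff_norm_sub_tendsto_zero] at hconv
    exact hconv
  have hlim0 : (⨅ n, u n) + S = 0 :=
    tendsto_nhds_unique (hdl.comp hφ.tendsto_atTop) hdz
  refine ⟨a, hfa, ?_⟩
  rw [tendsto_iff_norm_sub_tendsto_zero]
  rw [hlim0] at hdl
  exact hdl
end

section
/- Let (t_k) be a sequence in [0, t_max] with Σ_k |t_k − t_max| < ∞, and let (T_t)_{t ∈ [0,1]} be a family of operators on R^d such that ‖T_s(w) − T_t(w)‖ ≤ C·|s − t| for all w and s,t. If T* = T_{t_max} is averaged and has a fixed point, then the iteration w_{k+1} = T_{t_k}(w_k) converges to a fixed point of T*. -/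
open Filter Topology

set_option maxHeartbeats 1000000 in
/-- Convergence of FlowADMM with a varying time schedule: if `(t_k)` lies in
`[0, t_max]` with `Σ_k |t_k - t_max| < ∞`, the family `(T_t)` is uniformly
Lipschitz in `t` with constant `C`, and `T* = T_{t_max}` is averaged with a
fixed point, then the iteration `w_{k+1} = T_{t_k}(w_k)` converges to a fixed
point of `T*`. -/
theorem varying_schedule_convergence
    (d : ℕ) (C tmax : ℝ) (htmax0 : 0 ≤ tmax) (htmax1 : tmax ≤ 1)
    (tk : ℕ → ℝ) (htk : ∀ k, tk k ∈ Set.Icc (0 : ℝ) tmax)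
    (hsum : Summable (fun k => |tk k - tmax|))
    (T : ℝ → EuclideanSpace ℝ (Fin d) → EuclideanSpace ℝ (Fin d))
    (hTlip : ∀ s ∈ Set.Icc (0 : ℝ) 1, ∀ t ∈ Set.Icc (0 : ℝ) 1,
      ∀ w, ‖T s w - T t w‖ ≤ C * |s - t|)
    (lam : ℝ) (hlam0 : 0 < lam) (hlam1 : lam < 1)
    (N : EuclideanSpace ℝ (Fin d) → EuclideanSpace ℝ (Fin d))
    (hN : ∀ x y, ‖N x - N y‖ ≤ ‖x - y‖)
    (hTstar : ∀ x, T tmax x = (1 - lam) • x + lam • N x)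
    (hfix : ∃ p, T tmax p = p)
    (w : ℕ → EuclideanSpace ℝ (Fin d))
    (hiter : ∀ k, w (k + 1) = T (tk k) (w k)) :
    ∃ xstar, T tmax xstar = xstar ∧ Tendsto w atTop (𝓝 xstar) := by
  obtain ⟨p, hp⟩ := hfix
  -- `p` is a fixed point of `N`
  have hNp : N p = p := by
    have h := hTstar p
    rw [hp] at h
    have h2 : lam • N p = lam • p := by
      have h3 : (1 - lam) • p + lam • N p = (1 - lam) • p + lam • p := by
        rw [← h]; module
      exact add_left_cancel h3
    exact smul_right_injective _ (ne_of_gt hlam0) h2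
  -- `T tmax` is nonexpansive
  have hne : ∀ x y, ‖T tmax x - T tmax y‖ ≤ ‖x - y‖ := by
    intro x y
    rw [hTstar x, hTstar y]
    have heq : (1 - lam) • x + lam • N x - ((1 - lam) • y + lam • N y)
        = (1 - lam) • (x - y) + lam • (N x - N y) := by module
    rw [heq]
    calc ‖(1 - lam) • (x - y) + lam • (N x - N y)‖
        ≤ ‖(1 - lam) • (x - y)‖ + ‖lam • (N x - N y)‖ := norm_add_le _ _
      _ = (1 - lam) * ‖x - y‖ + lam * ‖N x - N y‖ := by
          rw [norm_smul, norm_smul, Real.norm_eq_abs, Real.norm_eq_abs,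
            abs_of_pos (by linarith), abs_of_pos hlam0]
      _ ≤ (1 - lam) * ‖x - y‖ + lam * ‖x - y‖ := by nlinarith [hN x y]
      _ = ‖x - y‖ := by ring
  -- averagedness inequality
  have avg : ∀ x, ‖T tmax x - p‖ ^ 2 + lam * (1 - lam) * ‖x - N x‖ ^ 2
      ≤ ‖x - p‖ ^ 2 := by
    intro x
    have heq : T tmax x - p = (1 - lam) • (x - p) + lam • (N x - p) := by
      rw [hTstar]; module
    have heq2 : x - N x = (x - p) - (N x - p) := by module
    rw [heq, heq2]
    set u := x - p with hu
    set v := N x - p with hv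
    have hvu : ‖v‖ ≤ ‖u‖ := by
      have h := hN x p; rw [hNp] at h; exact h
    have h1 : ‖(1 - lam) • u + lam • v‖ ^ 2
        = (1 - lam) ^ 2 * ‖u‖ ^ 2 + 2 * ((1 - lam) * lam) * inner ℝ u v
          + lam ^ 2 * ‖v‖ ^ 2 := by
      rw [norm_add_sq_real, norm_smul, norm_smul, real_inner_smul_left,
        real_inner_smul_right, Real.norm_eq_abs, Real.norm_eq_abs,
        abs_of_pos (by linarith : (0:ℝ) < 1 - lam), abs_of_pos hlam0]
      ring
    have h2 : ‖u - v‖ ^ 2 = ‖u‖ ^ 2 - 2 * inner ℝ u v + ‖v‖ ^ 2 := by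
      rw [norm_sub_sq_real]
    nlinarith [norm_nonneg u, norm_nonneg v, hlam0, hlam1, hvu,
      mul_le_mul hvu hvu (norm_nonneg v) (norm_nonneg u)]
  -- the error sequence
  have he_nonneg : ∀ k, (0:ℝ) ≤ ‖w (k + 1) - T tmax (w k)‖ := fun k => norm_nonneg _
  have hesum : Summable (fun k => ‖w (k + 1) - T tmax (w k)‖) := by
    apply Summable.of_nonneg_of_le he_nonneg _ (hsum.mul_left C)
    intro k
    rw [hiter k]
    exact hTlip (tk k) ⟨(htk k).1, le_trans (htk k).2 htmax1⟩ tmax ⟨htmax0, htmax1⟩ (w k)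
  set Es := ∑' k, ‖w (k + 1) - T tmax (w k)‖ with hEs
  have hEs0 : 0 ≤ Es := tsum_nonneg he_nonneg
  have he_le : ∀ k, ‖w (k + 1) - T tmax (w k)‖ ≤ Es :=
    fun k => Summable.le_tsum hesum k fun j _ => he_nonneg j
  have hpart : ∀ n, ∑ i ∈ Finset.range n, ‖w (i + 1) - T tmax (w i)‖ ≤ Es :=
    fun n => Summable.sum_le_tsum _ (fun i _ => he_nonneg i) hesum
  -- one step of the iteration
  have step : ∀ (z : EuclideanSpace ℝ (Fin d)) k,
      ‖w (k + 1) - z‖ ≤ ‖T tmax (w k) - z‖ + ‖w (k + 1) - T tmax (w k)‖ := by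
    intro z k
    calc ‖w (k + 1) - z‖
        = ‖(w (k + 1) - T tmax (w k)) + (T tmax (w k) - z)‖ := by
          rw [sub_add_sub_cancel]
      _ ≤ ‖w (k + 1) - T tmax (w k)‖ + ‖T tmax (w k) - z‖ := norm_add_le _ _
      _ = _ := add_comm _ _
  have step2 : ∀ z, T tmax z = z → ∀ k,
      ‖w (k + 1) - z‖ ≤ ‖w k - z‖ + ‖w (k + 1) - T tmax (w k)‖ := by
    intro z hz k
    refine (step z k).trans ?_
    have h := hne (w k) z
    rw [hz] at h
    linarith
  -- boundedness
  set M := ‖w 0 - p‖ + Es with hM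
  have ha_bound : ∀ n, ‖w n - p‖ ≤ M := by
    intro n
    have h : ∀ n, ‖w n - p‖ ≤ ‖w 0 - p‖ + ∑ i ∈ Finset.range n, ‖w (i + 1) - T tmax (w i)‖ := by
      intro n
      induction n with
      | zero => simp
      | succ n ih =>
        rw [Finset.sum_range_succ]
        have h2 := step2 p hp n
        linarith
    exact (h n).trans (by linarith [hpart n])
  -- summability of residuals
  have key : ∀ k, lam * (1 - lam) * ‖w k - N (w k)‖ ^ 2
      ≤ ‖w k - p‖ ^ 2 - ‖w (k + 1) - p‖ ^ 2 + ‖w (k + 1) - T tmax (w k)‖ * (2 * M + Es) := by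
    intro k
    have h1 := avg (w k)
    have h2 := step p k
    have h3 : ‖T tmax (w k) - p‖ ≤ ‖w k - p‖ := by
      have h := hne (w k) p; rwa [hp] at h
    have h4 := ha_bound k
    have h5 := he_le k
    have h6 := he_nonneg k
    have h7 : ‖w (k + 1) - p‖ ^ 2
        ≤ (‖T tmax (w k) - p‖ + ‖w (k + 1) - T tmax (w k)‖) ^ 2 := by
      nlinarith [norm_nonneg (w (k + 1) - p)]
    nlinarith [norm_nonneg (T tmax (w k) - p)]
  have hqsum : Summable (fun k => lam * (1 - lam) * ‖w k - N (w k)‖ ^ 2) := by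
    apply summable_of_sum_range_le
      (c := ‖w 0 - p‖ ^ 2 + (2 * M + Es) * Es)
    · intro n
      exact mul_nonneg (mul_nonneg hlam0.le (by linarith)) (sq_nonneg _)
    · intro n
      have tele : ∑ k ∈ Finset.range n, (‖w k - p‖ ^ 2 - ‖w (k + 1) - p‖ ^ 2)
          = ‖w 0 - p‖ ^ 2 - ‖w n - p‖ ^ 2 := by
        rw [Finset.sum_range_sub' (fun k => ‖w k - p‖ ^ 2)]
      have hM0 : 0 ≤ M := hM ▸ add_nonneg (norm_nonneg _) hEs0
      calc ∑ k ∈ Finset.range n, lam * (1 - lam) * ‖w k - N (w k)‖ ^ 2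
          ≤ ∑ k ∈ Finset.range n, (‖w k - p‖ ^ 2 - ‖w (k + 1) - p‖ ^ 2
              + ‖w (k + 1) - T tmax (w k)‖ * (2 * M + Es)) :=
            Finset.sum_le_sum fun k _ => key k
        _ = (‖w 0 - p‖ ^ 2 - ‖w n - p‖ ^ 2)
              + (∑ k ∈ Finset.range n, ‖w (k + 1) - T tmax (w k)‖) * (2 * M + Es) := by
            rw [Finset.sum_add_distrib, tele, ← Finset.sum_mul]
        _ ≤ ‖w 0 - p‖ ^ 2 + (2 * M + Es) * Es := by
            have h1 := hpart n
            nlinarith [sq_nonneg ‖w n - p‖, hM0, hEs0]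
  have hq0 : Tendsto (fun k => ‖w k - N (w k)‖) atTop (𝓝 0) := by
    have hsq : Summable (fun k => ‖w k - N (w k)‖ ^ 2) := by
      have hne0 : lam * (1 - lam) ≠ 0 := ne_of_gt (mul_pos hlam0 (by linarith))
      exact (summable_mul_left_iff (f := fun k => ‖w k - N (w k)‖ ^ 2)
        (a := lam * (1 - lam)) hne0).mp hqsum
    have h2 : Tendsto (fun k => ‖w k - N (w k)‖ ^ 2) atTop (𝓝 0) :=
      hsq.tendsto_atTop_zero
    have h3 : Tendsto (fun k => Real.sqrt (‖w k - N (w k)‖ ^ 2)) atTop (𝓝 (Real.sqrt 0)) :=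
      (Real.continuous_sqrt.tendsto 0).comp h2
    have h4 : ∀ k, Real.sqrt (‖w k - N (w k)‖ ^ 2) = ‖w k - N (w k)‖ :=
      fun k => Real.sqrt_sq (norm_nonneg _)
    simpa [h4] using h3
  -- convergent subsequence
  have hmem : ∀ n, w n ∈ Metric.closedBall p M := by
    intro n; rw [Metric.mem_closedBall, dist_eq_norm]; exact ha_bound n
  obtain ⟨x, -, φ, hφ, hconv⟩ :=
    tendsto_subseq_of_bounded Metric.isBounded_closedBall hmem
  have hwx : Tendsto (fun k => ‖w (φ k) - x‖) atTop (𝓝 0) := by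
    have h := tendsto_iff_norm_sub_tendsto_zero.mp hconv
    simpa [Function.comp] using h
  have hqφ : Tendsto (fun k => ‖w (φ k) - N (w (φ k))‖) atTop (𝓝 0) :=
    hq0.comp hφ.tendsto_atTop
  -- the limit is a fixed point
  have hxfix : T tmax x = x := by
    have hbound : ∀ k, ‖x - T tmax x‖
        ≤ 2 * ‖w (φ k) - x‖ + lam * ‖w (φ k) - N (w (φ k))‖ := by
      intro k
      have h2 : ‖w (φ k) - T tmax (w (φ k))‖ = lam * ‖w (φ k) - N (w (φ k))‖ := by
        rw [hTstar]
        have heq : w (φ k) - ((1 - lam) • w (φ k) + lam • N (w (φ k)))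
            = lam • (w (φ k) - N (w (φ k))) := by module
        rw [heq, norm_smul, Real.norm_eq_abs, abs_of_pos hlam0]
      have h3 := hne (w (φ k)) x
      have h4 : ‖x - w (φ k)‖ = ‖w (φ k) - x‖ := norm_sub_rev _ _
      have h1 : ‖x - T tmax x‖
          ≤ ‖x - w (φ k)‖ + ‖w (φ k) - T tmax (w (φ k))‖
            + ‖T tmax (w (φ k)) - T tmax x‖ := by
        have ht := dist_triangle4 x (w (φ k)) (T tmax (w (φ k))) (T tmax x)
        simpa [dist_eq_norm] using ht
      rw [h2, h4] at h1
      linarith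
    have hlim : Tendsto (fun k => 2 * ‖w (φ k) - x‖
        + lam * ‖w (φ k) - N (w (φ k))‖) atTop (𝓝 0) := by
      have h := (hwx.const_mul 2).add (hqφ.const_mul lam)
      simpa using h
    have h0 : ‖x - T tmax x‖ ≤ 0 :=
      le_of_tendsto_of_tendsto' tendsto_const_nhds hlim hbound
    have h1 : x - T tmax x = 0 :=
      norm_eq_zero.mp (le_antisymm h0 (norm_nonneg _))
    exact (sub_eq_zero.mp h1).symm
  -- convergence of the whole sequence
  refine ⟨x, hxfix, ?_⟩
  have mono : ∀ m n, m ≤ n → ‖w n - x‖ ≤ ‖w m - x‖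
      + ∑ i ∈ Finset.Ico m n, ‖w (i + 1) - T tmax (w i)‖ := by
    intro m n hmn
    induction n, hmn using Nat.le_induction with
    | base => simp
    | succ n hmn ih =>
      rw [Finset.sum_Ico_succ_top hmn]
      have h := step2 x hxfix n
      linarith
  rw [Metric.tendsto_atTop]
  intro ε hε
  have htail : Tendsto (fun m => ∑' i, ‖w (i + m + 1) - T tmax (w (i + m))‖) atTop (𝓝 0) :=
    tendsto_sum_nat_add (fun k => ‖w (k + 1) - T tmax (w k)‖)
  obtain ⟨m1, hm1⟩ := eventually_atTop.mp
    ((tendsto_order.1 htail).2 (ε / 2) (by linarith))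
  obtain ⟨K, hK⟩ := eventually_atTop.mp
    ((tendsto_order.1 hwx).2 (ε / 2) (by linarith))
  set k0 := max K m1 with hk0
  have hφk0 : m1 ≤ φ k0 := le_trans (le_max_right _ _) (hφ.id_le k0)
  refine ⟨φ k0, fun n hn => ?_⟩
  rw [dist_eq_norm]
  have hsum_tail : ∑ i ∈ Finset.Ico (φ k0) n, ‖w (i + 1) - T tmax (w i)‖
      ≤ ∑' i, ‖w (i + φ k0 + 1) - T tmax (w (i + φ k0))‖ := by
    rw [Finset.sum_Ico_eq_sum_range]
    have hsummable : Summable (fun i => ‖w (i + φ k0 + 1) - T tmax (w (i + φ k0))‖) :=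
      (summable_nat_add_iff (φ k0)).2 hesum
    calc ∑ i ∈ Finset.range (n - φ k0), ‖w (φ k0 + i + 1) - T tmax (w (φ k0 + i))‖
        = ∑ i ∈ Finset.range (n - φ k0), ‖w (i + φ k0 + 1) - T tmax (w (i + φ k0))‖ := by
          refine Finset.sum_congr rfl fun i _ => by rw [add_comm (φ k0) i]
      _ ≤ _ := Summable.sum_le_tsum _ (fun i _ => norm_nonneg _) hsummable
  have h1 := hK k0 (le_max_left _ _)
  have h2 := hm1 (φ k0) hφk0
  have h3 := mono (φ k0) n hn
  linarith
end
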